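/- Let p be a prime, d ≥ 0 an integer, and let k be the smallest power of p that is strictly greater than d. Then for every i ∈ {0, 1, …, d}, the binomial coefficient C(d+k−i, k−i) is not divisible by p if and only if i = 0. -/

import Mathlib

lemma digits_le_of_forall {p : ℕ} (hp : 2 ≤ p) :
    ∀ r m : ℕ, (∀ t, r / p ^ t % p ≤ m / p ^ t % p) → r ≤ m := by
  intro r
  induction r using Nat.strong_induction_on with
  | _ r ih =>
    intro m h
    rcases Nat.eq_zero_or_pos r with hr | hr
    · omega
    · have h0 := h 0
      simp only [pow_zero, Nat.div_one] at h0
      have hdiv : r / p ≤ m / p := by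
        refine ih (r / p) (Nat.div_lt_self hr (by omega)) (m / p) (fun t => ?_)
        have := h (t + 1)
        simpa [Nat.div_div_eq_div_mul, pow_succ, mul_comm] using this
      have h1 := Nat.div_add_mod r p
      have h2 := Nat.div_add_mod m p
      have h3 : p * (r / p) ≤ p * (m / p) := Nat.mul_le_mul_left p hdiv
      omega

lemma digit_shift {p j t m : ℕ} (hp : 2 ≤ p) (ht : t < j) :
    (m + p ^ j) / p ^ t % p = m / p ^ t % p := by
  have hd : (p : ℕ) ^ t ∣ p ^ j := pow_dvd_pow p ht.le
  rw [Nat.add_div_of_dvd_left hd, Nat.pow_div ht.le (by omega)]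
  have : p ∣ p ^ (j - t) := dvd_pow_self p (by omega)
  obtain ⟨c, hc⟩ := this
  simp [hc, Nat.add_mul_mod_self_left]

/-- Corollary of Lucas' theorem. Let `p` be a prime, `d ≥ 0`, and let `k` be
the smallest power of `p` strictly greater than `d`. Then for every `i ∈ {0,…,d}`,
`C(d+k−i, k−i)` is not divisible by `p` if and only if `i = 0`. -/
theorem stmt4 (p : ℕ) (hp : p.Prime) (d k : ℕ)
    (hkpow : ∃ j : ℕ, k = p ^ j) (hdk : d < k)
    (hmin : ∀ j : ℕ, d < p ^ j → k ≤ p ^ j) :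
    ∀ i ≤ d, (¬ p ∣ (d + k - i).choose (k - i)) ↔ i = 0 := by
  obtain ⟨j, rfl⟩ := hkpow
  haveI : Fact p.Prime := ⟨hp⟩
  have hp2 : 2 ≤ p := hp.two_le
  have hppos : 0 < p ^ j := Nat.pow_pos (n := j) (by omega)
  intro i hi
  constructor
  · intro hnd
    by_contra hne
    apply hnd
    -- set up: n = p^j + (d - i), r = p^j - i
    have hid : 0 < i := Nat.pos_of_ne_zero hne
    set m := d - i with hm
    set r := p ^ j - i with hr
    have hn : d + p ^ j - i = m + p ^ j := by omega
    have hmlt : m < p ^ j := by omega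
    have hrlt : r < p ^ j := by omega
    have hrm : m < r := by omega
    -- find a digit position t < j where r's digit exceeds m's digit
    have hex : ∃ t < j, m / p ^ t % p < r / p ^ t % p := by
      by_contra hall
      push_neg at hall
      have : r ≤ m := by
        refine digits_le_of_forall hp2 r m (fun t => ?_)
        rcases lt_or_ge t j with ht | ht
        · exact hall t ht
        · have : r / p ^ t = 0 :=
            Nat.div_eq_of_lt (lt_of_lt_of_le hrlt (Nat.pow_le_pow_right (by omega) ht))
          simp [this]
      omega
    obtain ⟨t, htj, hdig⟩ := hex
    -- apply Lucas
    have hl := Choose.choose_modEq_choose_mul_prod_range_choose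
      (n := d + p ^ j - i) (k := r) (p := p) j
    rw [← ZMod.intCast_eq_intCast_iff] at hl
    push_cast at hl
    rw [← ZMod.natCast_eq_zero_iff, hl]
    have hfac : ((d + p ^ j - i) / p ^ t % p).choose (r / p ^ t % p) = 0 := by
      apply Nat.choose_eq_zero_of_lt
      rw [hn, digit_shift hp2 htj]
      exact hdig
    rw [Finset.prod_eq_zero (Finset.mem_range.mpr htj) (by rw [hfac]; norm_num)]
    ring
  · rintro rfl
    simp only [Nat.sub_zero]
    rw [← ZMod.natCast_eq_zero_iff]
    have hl := Choose.choose_modEq_choose_mul_prod_range_choose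
      (n := d + p ^ j) (k := p ^ j) (p := p) j
    rw [← ZMod.intCast_eq_intCast_iff] at hl
    push_cast at hl
    rw [hl]
    have h1 : (d + p ^ j) / p ^ j = 1 := by
      rw [Nat.add_div_right _ hppos, Nat.div_eq_of_lt hdk]
    have h2 : p ^ j / p ^ j = 1 := Nat.div_self hppos
    rw [h1, h2, Nat.choose_self]
    have hprod : ∀ t ∈ Finset.range j,
        (((d + p ^ j) / p ^ t % p).choose (p ^ j / p ^ t % p) : ZMod p) = 1 := by
      intro t ht
      rw [Finset.mem_range] at ht
      have hz : p ^ j / p ^ t % p = 0 := by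
        rw [Nat.pow_div ht.le (by omega)]
        have : p ∣ p ^ (j - t) := dvd_pow_self p (by omega)
        omega
      rw [hz, Nat.choose_zero_right]
      norm_num
    rw [Finset.prod_congr rfl hprod]
    simp only [Finset.prod_const_one, Nat.cast_one, mul_one]
    exact one_ne_zero
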